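/- Plateau formation: Let γ ∈ [0,3), λ > 0, and let f : [0,∞) → ℝ be continuous, non-negative, non-decreasing, with f(0) = 0 and f(t) ≥ λ t^γ for all t ≥ 0. Set Υ := (λ(3−γ)⁴/(64(1+γ)))^{1/(3−γ)}. Let x₀ ∈ ℝⁿ, r > 0, α_r > 0, and let u ∈ C(B̄_r(x₀)) be the non-negative viscosity solution of Δ∞u = f(u) in B_r(x₀) with u = α_r on ∂B_r(x₀). If R := r − (α_r/Υ)^{(3−γ)/4} > 0, then u ≡ 0 on the closed ball B̄_R(x₀). -/

import Mathlib

open Set Metric Filter MeasureTheory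

/-- The infinity Laplacian of a (C²) function `φ` at `x`:
`Δ∞φ(x) = Σ_{i,j} ∂_iφ(x) ∂_jφ(x) ∂_{ij}φ(x)`. -/
noncomputable def infLap {n : ℕ} (φ : EuclideanSpace ℝ (Fin n) → ℝ)
    (x : EuclideanSpace ℝ (Fin n)) : ℝ :=
  ∑ i : Fin n, ∑ j : Fin n,
    fderiv ℝ φ x (EuclideanSpace.single i 1) * fderiv ℝ φ x (EuclideanSpace.single j 1) *
      fderiv ℝ (fun y => fderiv ℝ φ y (EuclideanSpace.single i 1)) x (EuclideanSpace.single j 1)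

/-- `u` is a viscosity supersolution of `Δ∞u = F(x, u(x))` in `Ω`. -/
def IsViscSupersol {n : ℕ} (Ω : Set (EuclideanSpace ℝ (Fin n)))
    (u : EuclideanSpace ℝ (Fin n) → ℝ)
    (F : EuclideanSpace ℝ (Fin n) → ℝ → ℝ) : Prop :=
  ∀ φ : EuclideanSpace ℝ (Fin n) → ℝ, ContDiff ℝ 2 φ →
    ∀ x₀ ∈ Ω, φ x₀ = u x₀ → IsLocalMin (fun x => u x - φ x) x₀ →
      infLap φ x₀ ≤ F x₀ (φ x₀)

/-- `u` is a viscosity subsolution of `Δ∞u = F(x, u(x))` in `Ω`. -/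
def IsViscSubsol {n : ℕ} (Ω : Set (EuclideanSpace ℝ (Fin n)))
    (u : EuclideanSpace ℝ (Fin n) → ℝ)
    (F : EuclideanSpace ℝ (Fin n) → ℝ → ℝ) : Prop :=
  ∀ φ : EuclideanSpace ℝ (Fin n) → ℝ, ContDiff ℝ 2 φ →
    ∀ x₀ ∈ Ω, φ x₀ = u x₀ → IsLocalMax (fun x => u x - φ x) x₀ →
      F x₀ (φ x₀) ≤ infLap φ x₀

/-- `u` is a viscosity solution of `Δ∞u = F(x, u(x))` in `Ω`. -/
def IsViscSol {n : ℕ} (Ω : Set (EuclideanSpace ℝ (Fin n)))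
    (u : EuclideanSpace ℝ (Fin n) → ℝ)
    (F : EuclideanSpace ℝ (Fin n) → ℝ → ℝ) : Prop :=
  IsViscSupersol Ω u F ∧ IsViscSubsol Ω u F



namespace Plateau

variable {n : ℕ}

/-- squared distance, coordinatewise -/
def qf (v x : EuclideanSpace ℝ (Fin n)) : ℝ := ∑ i, (x i - v i) ^ 2

lemma qf_nonneg (v x : EuclideanSpace ℝ (Fin n)) : 0 ≤ qf v x :=
  Finset.sum_nonneg fun i _ => sq_nonneg _

lemma qf_eq_dist (v x : EuclideanSpace ℝ (Fin n)) : qf v x = dist x v ^ 2 := by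
  rw [EuclideanSpace.dist_eq, Real.sq_sqrt]
  · unfold qf; congr 1; ext i; rw [Real.dist_eq, sq_abs]
  · exact Finset.sum_nonneg fun i _ => sq_nonneg _

lemma qf_self (v : EuclideanSpace ℝ (Fin n)) : qf v v = 0 := by
  simp [qf]

lemma qf_continuous (v : EuclideanSpace ℝ (Fin n)) : Continuous (qf v) := by
  unfold qf
  exact continuous_finset_sum _ fun i _ =>
    (((EuclideanSpace.proj i).continuous).sub continuous_const).pow 2

/-- the gradient CLM of qf at x -/
noncomputable def qL (v x : EuclideanSpace ℝ (Fin n)) : EuclideanSpace ℝ (Fin n) →L[ℝ] ℝ :=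
  ∑ i, (2 * (x i - v i)) • (EuclideanSpace.proj (𝕜 := ℝ) i)

lemma qL_apply_single (v x : EuclideanSpace ℝ (Fin n)) (j : Fin n) :
    qL v x (EuclideanSpace.single j 1) = 2 * (x j - v j) := by
  unfold qL
  rw [ContinuousLinearMap.sum_apply]
  have : ∀ i : Fin n, ((2 * (x i - v i)) • (EuclideanSpace.proj (𝕜 := ℝ) i))
      (EuclideanSpace.single j 1) = if i = j then 2 * (x i - v i) else 0 := by
    intro i
    rw [ContinuousLinearMap.smul_apply]
    have : EuclideanSpace.proj (𝕜 := ℝ) i (EuclideanSpace.single j 1)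
        = if i = j then 1 else 0 := by
      have := EuclideanSpace.single_apply (𝕜 := ℝ) j (1:ℝ) i
      simpa [eq_comm] using this
    rw [this]
    split <;> simp
  rw [Finset.sum_congr rfl (fun i _ => this i), Finset.sum_ite_eq']
  simp

lemma hasFDerivAt_qf (v x : EuclideanSpace ℝ (Fin n)) :
    HasFDerivAt (qf v) (qL v x) x := by
  unfold qf qL
  apply HasFDerivAt.fun_sum
  intro i _
  have h1 : HasFDerivAt (fun y : EuclideanSpace ℝ (Fin n) => y i - v i)
      (EuclideanSpace.proj (𝕜 := ℝ) i) x :=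
    (EuclideanSpace.proj (𝕜 := ℝ) i).hasFDerivAt.sub_const (v i)
  have h2 := h1.mul h1
  have : (x i - v i) • (EuclideanSpace.proj (𝕜 := ℝ) i)
      + (x i - v i) • (EuclideanSpace.proj (𝕜 := ℝ) i)
      = (2 * (x i - v i)) • (EuclideanSpace.proj (𝕜 := ℝ) i) := by
    rw [two_mul, add_smul]
  rw [← this]
  have heq : (fun y : EuclideanSpace ℝ (Fin n) => (y i - v i) ^ 2)
      = fun y => (y i - v i) * (y i - v i) := by ext y; ring
  rw [heq]
  exact h2

end Plateau

namespace Plateau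
variable {n : ℕ}

/-- quadratic-in-q test function -/
def tf (v : EuclideanSpace ℝ (Fin n)) (t₀ a b c : ℝ) (x : EuclideanSpace ℝ (Fin n)) : ℝ :=
  a + b * (qf v x - t₀) + c * (qf v x - t₀) ^ 2

lemma tf_contDiff (v : EuclideanSpace ℝ (Fin n)) (t₀ a b c : ℝ) :
    ContDiff ℝ 2 (tf v t₀ a b c) := by
  have hq : ContDiff ℝ 2 (qf v) := by
    unfold qf
    exact ContDiff.sum fun i _ =>
      (((EuclideanSpace.proj (𝕜 := ℝ) i).contDiff).sub contDiff_const).pow 2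
  unfold tf
  exact (contDiff_const.add ((contDiff_const.mul (hq.sub contDiff_const)))).add
    (contDiff_const.mul ((hq.sub contDiff_const).pow 2))

lemma hasFDerivAt_tf (v : EuclideanSpace ℝ (Fin n)) (t₀ a b c : ℝ)
    (x : EuclideanSpace ℝ (Fin n)) :
    HasFDerivAt (tf v t₀ a b c)
      ((b + 2 * c * (qf v x - t₀)) • qL v x) x := by
  have hP : HasDerivAt (fun t : ℝ => a + b * (t - t₀) + c * (t - t₀) ^ 2)
      (b + 2 * c * (qf v x - t₀)) (qf v x) := by
    have h1 : HasDerivAt (fun t : ℝ => t - t₀) 1 (qf v x) :=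
      (hasDerivAt_id _).sub_const _
    have h2 := ((h1.const_mul b).const_add a).add ((h1.pow 2).const_mul c)
    exact h2.congr_deriv (by push_cast; ring)
  exact hP.comp_hasFDerivAt x (hasFDerivAt_qf v x)

lemma fderiv_tf_apply (v : EuclideanSpace ℝ (Fin n)) (t₀ a b c : ℝ)
    (x : EuclideanSpace ℝ (Fin n)) (i : Fin n) :
    fderiv ℝ (tf v t₀ a b c) x (EuclideanSpace.single i 1)
      = (b + 2 * c * (qf v x - t₀)) * (2 * (x i - v i)) := by
  rw [(hasFDerivAt_tf v t₀ a b c x).fderiv]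
  rw [ContinuousLinearMap.smul_apply, qL_apply_single]
  rfl

lemma fderiv2_tf_apply (v : EuclideanSpace ℝ (Fin n)) (t₀ a b c : ℝ)
    (x : EuclideanSpace ℝ (Fin n)) (i j : Fin n) :
    fderiv ℝ (fun y => fderiv ℝ (tf v t₀ a b c) y (EuclideanSpace.single i 1)) x
        (EuclideanSpace.single j 1)
      = (2 * c * (2 * (x j - v j))) * (2 * (x i - v i))
        + (b + 2 * c * (qf v x - t₀)) * (2 * (if i = j then 1 else 0)) := by
  have hfun : (fun y => fderiv ℝ (tf v t₀ a b c) y (EuclideanSpace.single i 1))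
      = fun y => (b + 2 * c * (qf v y - t₀)) * (2 * (y i - v i)) := by
    ext y; rw [fderiv_tf_apply]
  rw [hfun]
  -- product rule
  have hA : HasFDerivAt (fun y : EuclideanSpace ℝ (Fin n) => b + 2 * c * (qf v y - t₀))
      ((2 * c) • qL v x) x := by
    have hP : HasDerivAt (fun t : ℝ => b + 2 * c * (t - t₀)) (2 * c) (qf v x) := by
      simpa using (((hasDerivAt_id (qf v x)).sub_const t₀).const_mul (2*c)).const_add b
    exact hP.comp_hasFDerivAt x (hasFDerivAt_qf v x)
  have hB : HasFDerivAt (fun y : EuclideanSpace ℝ (Fin n) => 2 * (y i - v i))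
      ((2:ℝ) • (EuclideanSpace.proj (𝕜 := ℝ) i)) x := by
    exact (((EuclideanSpace.proj (𝕜 := ℝ) i).hasFDerivAt.sub_const (v i)).const_mul 2)
  have hprod : HasFDerivAt (fun y : EuclideanSpace ℝ (Fin n) => (b + 2 * c * (qf v y - t₀)) * (2 * (y i - v i))) _ x := hA.mul hB
  rw [hprod.fderiv]
  simp only [ContinuousLinearMap.add_apply, ContinuousLinearMap.smul_apply, smul_eq_mul]
  rw [qL_apply_single]
  have hproj : EuclideanSpace.proj (𝕜 := ℝ) i (EuclideanSpace.single j 1)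
      = if i = j then 1 else 0 := by
    have := EuclideanSpace.single_apply (𝕜 := ℝ) j (1:ℝ) i
    simpa [eq_comm] using this
  rw [hproj]
  ring

end Plateau

namespace Plateau
variable {n : ℕ}

lemma infLap_tf (v : EuclideanSpace ℝ (Fin n)) (t₀ a b c : ℝ)
    (x : EuclideanSpace ℝ (Fin n)) :
    infLap (tf v t₀ a b c) x
      = 32 * c * (b + 2 * c * (qf v x - t₀)) ^ 2 * (qf v x) ^ 2
        + 8 * (b + 2 * c * (qf v x - t₀)) ^ 3 * (qf v x) := by
  set D := b + 2 * c * (qf v x - t₀) with hD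
  unfold infLap
  have hsummand : ∀ i j : Fin n,
      fderiv ℝ (tf v t₀ a b c) x (EuclideanSpace.single i 1) *
        fderiv ℝ (tf v t₀ a b c) x (EuclideanSpace.single j 1) *
        fderiv ℝ (fun y => fderiv ℝ (tf v t₀ a b c) y (EuclideanSpace.single i 1)) x
          (EuclideanSpace.single j 1)
      = 32 * c * D ^ 2 * ((x i - v i) ^ 2 * (x j - v j) ^ 2)
        + (8 * D ^ 3 * (x i - v i) ^ 2) * (if i = j then 1 else 0) := by
    intro i j
    rw [fderiv_tf_apply, fderiv_tf_apply, fderiv2_tf_apply, ← hD]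
    split
    · rename_i h; subst h; ring
    · ring
  calc (∑ i : Fin n, ∑ j : Fin n, _) = ∑ i : Fin n, ∑ j : Fin n,
        (32 * c * D ^ 2 * ((x i - v i) ^ 2 * (x j - v j) ^ 2)
          + (8 * D ^ 3 * (x i - v i) ^ 2) * (if i = j then 1 else 0)) := by
        exact Finset.sum_congr rfl fun i _ => Finset.sum_congr rfl fun j _ => hsummand i j
    _ = ∑ i : Fin n, (32 * c * D ^ 2 * ((x i - v i) ^ 2 * qf v x)
          + 8 * D ^ 3 * (x i - v i) ^ 2) := by
        apply Finset.sum_congr rfl; intro i _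
        rw [Finset.sum_add_distrib]
        congr 1
        · rw [← Finset.mul_sum, ← Finset.mul_sum]; rfl
        · simp [mul_ite]
    _ = 32 * c * D ^ 2 * (qf v x * qf v x) + 8 * D ^ 3 * qf v x := by
        rw [Finset.sum_add_distrib, ← Finset.mul_sum, ← Finset.mul_sum,
          ← Finset.sum_mul]
        rfl
    _ = _ := by ring
end Plateau

namespace Plateau

lemma taylor_upper (Υ e qs ε : ℝ) (hqs : 0 < qs) (hε : 0 < ε) :
    ∃ δ : ℝ, 0 < δ ∧ δ < qs ∧ ∀ t : ℝ, |t - qs| ≤ δ →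
      Υ * t ^ e ≤ Υ * qs ^ e + (Υ * e * qs ^ (e - 1)) * (t - qs)
        + ((Υ * e * (e - 1) * qs ^ (e - 2)) / 2 + ε) * (t - qs) ^ 2 := by
  set B := Υ * e * qs ^ (e - 1) with hB
  set G2 := Υ * e * (e - 1) * qs ^ (e - 2) with hG2
  set c2 := G2 + 2 * ε with hc2
  -- continuity of second derivative at qs
  have hg2cont : ContinuousAt (fun t : ℝ => Υ * e * (e - 1) * t ^ (e - 2)) qs :=
    (Real.continuousAt_rpow_const qs (e - 2) (Or.inl hqs.ne')).const_mul _
  have hev : ∀ᶠ t in nhds qs, Υ * e * (e - 1) * t ^ (e - 2) < c2 := by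
    apply hg2cont.eventually_lt continuousAt_const
    rw [hc2, hG2]; linarith
  rw [Metric.eventually_nhds_iff] at hev
  obtain ⟨δ0, hδ0, hball⟩ := hev
  refine ⟨min (δ0 / 2) (qs / 2), by positivity, lt_of_le_of_lt (min_le_right _ _) (by linarith), ?_⟩
  set δ := min (δ0 / 2) (qs / 2) with hδdef
  intro t ht
  -- all points of the interval are positive
  have hpos : ∀ s : ℝ, s ∈ Icc (qs - δ) (qs + δ) → 0 < s := by
    intro s hs
    have h1 : δ ≤ qs / 2 := min_le_right _ _
    have := hs.1; simp only [mem_Icc] at hs; linarith [hs.1]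
  have htmem : t ∈ Icc (qs - δ) (qs + δ) := by
    rw [abs_le] at ht; constructor <;> [linarith [ht.1]; linarith [ht.2]]
  -- the auxiliary functions
  set k : ℝ → ℝ := fun s => Υ * qs ^ e + B * (s - qs) + (G2 / 2 + ε) * (s - qs) ^ 2 - Υ * s ^ e
    with hk
  set h : ℝ → ℝ := fun s => B + c2 * (s - qs) - Υ * (e * s ^ (e - 1)) with hh
  have hkd : ∀ s : ℝ, 0 < s → HasDerivAt k (h s) s := by
    intro s hs
    have h1 : HasDerivAt (fun s : ℝ => s - qs) 1 s := (hasDerivAt_id s).sub_const qs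
    have h2 : HasDerivAt (fun s : ℝ => Υ * qs ^ e + B * (s - qs) + (G2/2 + ε) * (s - qs) ^ 2)
        (B + (G2/2 + ε) * (2 * (s - qs))) s := by
      have := ((h1.const_mul B).const_add (Υ * qs ^ e)).add ((h1.pow 2).const_mul (G2/2 + ε))
      exact this.congr_deriv (by push_cast; ring)
    have h3 : HasDerivAt (fun s : ℝ => Υ * s ^ e) (Υ * (e * s ^ (e - 1))) s :=
      (Real.hasDerivAt_rpow_const (Or.inl hs.ne')).const_mul Υ
    have := h2.sub h3
    exact this.congr_deriv (by rw [hh, hc2]; ring)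
  have hhd : ∀ s : ℝ, 0 < s → HasDerivAt h (c2 - Υ * e * (e - 1) * s ^ (e - 2)) s := by
    intro s hs
    have h1 : HasDerivAt (fun s : ℝ => B + c2 * (s - qs)) c2 s := by
      simpa using (((hasDerivAt_id s).sub_const qs).const_mul c2).const_add B
    have h2 : HasDerivAt (fun s : ℝ => Υ * (e * s ^ (e - 1))) (Υ * e * (e - 1) * s ^ (e - 2)) s := by
      have h3 : HasDerivAt (fun s : ℝ => s ^ (e - 1)) ((e - 1) * s ^ (e - 1 - 1)) s :=
        Real.hasDerivAt_rpow_const (Or.inl hs.ne')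
      have := (h3.const_mul e).const_mul Υ
      exact this.congr_deriv (by rw [show e - 1 - 1 = e - 2 by ring]; ring)
    exact h1.sub h2
  -- h is monotone on the interval
  have hmono : MonotoneOn h (Icc (qs - δ) (qs + δ)) := by
    apply monotoneOn_of_deriv_nonneg (convex_Icc _ _)
    · intro s hs
      exact ((hhd s (hpos s hs)).continuousAt).continuousWithinAt
    · intro s hs
      rw [interior_Icc] at hs
      exact ((hhd s (hpos s (Ioo_subset_Icc_self hs))).differentiableAt).differentiableWithinAt
    · intro s hs
      rw [interior_Icc] at hs
      have hsp := hpos s (Ioo_subset_Icc_self hs)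
      rw [(hhd s hsp).deriv]
      have : dist s qs < δ0 := by
        rw [Real.dist_eq, abs_lt]
        have h1 : δ ≤ δ0 / 2 := min_le_left _ _
        constructor <;> [linarith [hs.1]; linarith [hs.2]]
      have := hball this
      linarith
  -- conclude: k ≥ 0 on the interval
  have hkq : k qs = 0 := by simp [hk]
  have hqsmem : qs ∈ Icc (qs - δ) (qs + δ) := by
    have : (0:ℝ) < δ := by positivity
    constructor <;> simp only [hδdef] <;> nlinarith [this]
  have hkey : 0 ≤ k t := by
    rcases le_total qs t with hle | hle
    · -- right side: k monotone on [qs, qs+δ]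
      have hsub : Icc qs (qs + δ) ⊆ Icc (qs - δ) (qs + δ) := by
        apply Icc_subset_Icc _ le_rfl
        have : (0:ℝ) < δ := by positivity
        linarith
      have hmonoK : MonotoneOn k (Icc qs (qs + δ)) := by
        apply monotoneOn_of_deriv_nonneg (convex_Icc _ _)
        · intro s hs
          exact ((hkd s (hpos s (hsub hs))).continuousAt).continuousWithinAt
        · intro s hs
          rw [interior_Icc] at hs
          exact ((hkd s (hpos s (hsub (Ioo_subset_Icc_self hs)))).differentiableAt).differentiableWithinAt
        · intro s hs
          rw [interior_Icc] at hs
          rw [(hkd s (hpos s (hsub (Ioo_subset_Icc_self hs)))).deriv]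
          have h0 : h qs = 0 := by
            simp only [hh, hB]; ring
          have := hmono hqsmem (hsub (Ioo_subset_Icc_self hs)) (le_of_lt hs.1)
          linarith
      have ht2 : t ∈ Icc qs (qs + δ) := ⟨hle, htmem.2⟩
      have := hmonoK (left_mem_Icc.2 (by linarith [htmem.2])) ht2 hle
      rw [hkq] at this; linarith
    · -- left side: k antitone on [qs-δ, qs]
      have hsub : Icc (qs - δ) qs ⊆ Icc (qs - δ) (qs + δ) := by
        apply Icc_subset_Icc le_rfl
        have : (0:ℝ) < δ := by positivity
        linarith
      have hantiK : AntitoneOn k (Icc (qs - δ) qs) := by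
        apply antitoneOn_of_deriv_nonpos (convex_Icc _ _)
        · intro s hs
          exact ((hkd s (hpos s (hsub hs))).continuousAt).continuousWithinAt
        · intro s hs
          rw [interior_Icc] at hs
          exact ((hkd s (hpos s (hsub (Ioo_subset_Icc_self hs)))).differentiableAt).differentiableWithinAt
        · intro s hs
          rw [interior_Icc] at hs
          rw [(hkd s (hpos s (hsub (Ioo_subset_Icc_self hs)))).deriv]
          have h0 : h qs = 0 := by
            simp only [hh, hB]; ring
          have := hmono (hsub (Ioo_subset_Icc_self hs)) hqsmem (le_of_lt hs.2)
          linarith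
      have ht2 : t ∈ Icc (qs - δ) qs := ⟨htmem.1, hle⟩
      have := hantiK ht2 (right_mem_Icc.2 (by linarith [htmem.1])) hle
      rw [hkq] at this; linarith
  simp only [hk] at hkey
  linarith

end Plateau

namespace Plateau

lemma main_identity (γ lam Υ q : ℝ) (hγ : 0 < γ) (hγ3 : γ < 3) (hlam : 0 < lam)
    (hΥ : 0 < Υ) (hq : 0 < q)
    (H : Υ ^ ((3:ℝ) - γ) = lam * (3 - γ) ^ 4 / (64 * (1 + γ))) :
    16 * (Υ * (4/(3-γ)/2) * (4/(3-γ)/2 - 1) * q ^ (4/(3-γ)/2 - 2))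
        * (Υ * (4/(3-γ)/2) * q ^ (4/(3-γ)/2 - 1)) ^ 2 * q ^ 2
      + 8 * (Υ * (4/(3-γ)/2) * q ^ (4/(3-γ)/2 - 1)) ^ 3 * q
    = lam * (Υ * q ^ (4/(3-γ)/2)) ^ γ := by
  have h3γ : (0:ℝ) < 3 - γ := by linarith
  set e : ℝ := 4 / (3 - γ) / 2 with he
  have hee : e * (3 - γ) = 2 := by rw [he]; field_simp; ring
  have hq' : (0:ℝ) ≤ q := hq.le
  have key : ∀ a b : ℝ, q ^ a * q ^ b = q ^ (a + b) := fun a b => (Real.rpow_add hq a b).symm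
  have key1 : ∀ a : ℝ, q ^ a * q = q ^ (a + 1) := fun a => (Real.rpow_add_one hq.ne' a).symm
  have A : q ^ (e-2) * q ^ (e-1) * q ^ (e-1) * q * q = q ^ (e*3-2) := by
    rw [key (e-2) (e-1), key (e-2+(e-1)) (e-1), key1 (e-2+(e-1)+(e-1)),
      key1 (e-2+(e-1)+(e-1)+1)]
    congr 1; ring
  have Bq : q ^ (e-1) * q ^ (e-1) * q ^ (e-1) * q = q ^ (e*3-2) := by
    rw [key (e-1) (e-1), key (e-1+(e-1)) (e-1), key1 (e-1+(e-1)+(e-1))]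
    congr 1; ring
  have RHS : lam * (Υ * q ^ e) ^ γ = lam * Υ ^ γ * q ^ (e * γ) := by
    rw [Real.mul_rpow hΥ.le (Real.rpow_pos_of_pos hq e).le, ← Real.rpow_mul hq' e γ]
    ring
  rw [RHS]
  have hexp : e * 3 - 2 = e * γ := by linear_combination hee
  have hcoef : (Υ * e) ^ 3 * (16 * (e-1) + 8) = lam * Υ ^ γ := by
    have hcast : (Υ:ℝ) ^ (3:ℕ) = Υ ^ ((3:ℝ)) := by
      rw [← Real.rpow_natCast Υ 3]; norm_num
    rw [mul_pow, hcast, show (3:ℝ) = γ + (3 - γ) by ring, Real.rpow_add hΥ, H]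
    have he2 : e = 2 / (3 - γ) := by rw [he]; ring
    rw [he2]
    field_simp
    ring
  calc 16 * (Υ * e * (e - 1) * q ^ (e - 2)) * (Υ * e * q ^ (e - 1)) ^ 2 * q ^ 2
        + 8 * (Υ * e * q ^ (e - 1)) ^ 3 * q
      = 16 * (Υ * e * (e-1)) * (Υ * e) ^ 2
          * (q ^ (e-2) * q ^ (e-1) * q ^ (e-1) * q * q)
        + 8 * (Υ * e) ^ 3 * (q ^ (e-1) * q ^ (e-1) * q ^ (e-1) * q) := by ring
    _ = (Υ * e) ^ 3 * (16 * (e-1) + 8) * q ^ (e*3-2) := by rw [A, Bq]; ring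
    _ = lam * Υ ^ γ * q ^ (e * γ) := by rw [hexp, hcoef]

end Plateau


open Plateau

/-- Plateau formation (Remark 3.1). -/
theorem plateau_formation {n : ℕ} (γ lam : ℝ) (hγ0 : 0 ≤ γ) (hγ3 : γ < 3) (hlam : 0 < lam)
    (f : ℝ → ℝ) (hfc : ContinuousOn f (Ici 0)) (hfnn : ∀ t ∈ Ici (0 : ℝ), 0 ≤ f t)
    (hfmono : MonotoneOn f (Ici 0)) (hf0 : f 0 = 0)
    (hflb : ∀ t : ℝ, 0 ≤ t → lam * t ^ γ ≤ f t)
    (Υ : ℝ) (hΥ : Υ = (lam * (3 - γ) ^ 4 / (64 * (1 + γ))) ^ (1 / (3 - γ)))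
    (x₀ : EuclideanSpace ℝ (Fin n)) (r α R : ℝ) (hr : 0 < r) (hα : 0 < α)
    (hR : R = r - (α / Υ) ^ ((3 - γ) / 4)) (hRpos : 0 < R)
    (u : EuclideanSpace ℝ (Fin n) → ℝ)
    (huc : ContinuousOn u (closedBall x₀ r)) (hu0 : ∀ x ∈ closedBall x₀ r, 0 ≤ u x)
    (hsol : IsViscSol (ball x₀ r) u (fun _ t => f t))
    (hbd : ∀ x ∈ sphere x₀ r, u x = α) :
    ∀ x ∈ closedBall x₀ R, u x = 0 := by
  classical
  -- γ = 0 is impossible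
  rcases eq_or_lt_of_le hγ0 with hγeq | hγpos
  · exfalso
    have h1 := hflb 0 le_rfl
    rw [← hγeq, Real.rpow_zero, hf0] at h1
    linarith
  have h3γ : (0:ℝ) < 3 - γ := by linarith
  have h1γ : (0:ℝ) < 1 + γ := by linarith
  have hbase : 0 < lam * (3 - γ) ^ 4 / (64 * (1 + γ)) :=
    div_pos (mul_pos hlam (pow_pos h3γ 4)) (by linarith)
  have hΥpos : 0 < Υ := hΥ ▸ Real.rpow_pos_of_pos hbase _
  have hΥ3γ : Υ ^ ((3:ℝ) - γ) = lam * (3 - γ) ^ 4 / (64 * (1 + γ)) := by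
    rw [hΥ, ← Real.rpow_mul hbase.le, one_div, inv_mul_cancel₀ h3γ.ne', Real.rpow_one]
  set e : ℝ := 4 / (3 - γ) / 2 with he
  have hepos : 0 < e := by rw [he]; positivity
  have hee : e * (3 - γ) = 2 := by rw [he]; field_simp; ring
  have he64 : 0 < 6 * e - 4 := by
    have h1 : (6 * e - 4) * (3 - γ) = 4 * γ := by linear_combination 6 * hee
    nlinarith [h1, mul_pos h3γ hγpos]
  set d : ℝ := (α / Υ) ^ ((3 - γ) / 4) with hd
  have hdpos : 0 < d := Real.rpow_pos_of_pos (div_pos hα hΥpos) _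
  have hrR : r - R = d := by rw [hR]; ring
  have hRr : R < r := by linarith
  have hαd : Υ * (d ^ 2) ^ e = α := by
    have h2 : ((d:ℝ) ^ (2:ℕ)) = d ^ ((2:ℝ)) := by
      rw [← Real.rpow_natCast d 2]; norm_num
    rw [h2, ← Real.rpow_mul hdpos.le]
    rw [hd, ← Real.rpow_mul (div_pos hα hΥpos).le]
    have hex : (3 - γ) / 4 * (2 * e) = 1 := by rw [he]; field_simp
    rw [hex, Real.rpow_one, mul_div_cancel₀ _ hΥpos.ne']
  -- the barrier and the maximum of u - Φ
  intro z hz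
  have hzR : dist z x₀ ≤ R := mem_closedBall.1 hz
  have hz' : z ∈ closedBall x₀ r := mem_closedBall.2 (by linarith)
  have hzball : z ∈ ball x₀ r := mem_ball.2 (by linarith)
  refine le_antisymm ?_ (hu0 z hz')
  by_contra hcon
  push_neg at hcon
  have upos : 0 < u z := hcon
  set Φ : EuclideanSpace ℝ (Fin n) → ℝ := fun x => Υ * (qf z x) ^ e with hΦ
  have hΦcont : Continuous Φ :=
    continuous_const.mul ((qf_continuous z).rpow_const (fun x => Or.inr hepos.le))
  have hΦnn : ∀ x, 0 ≤ Φ x := fun x =>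
    mul_nonneg hΥpos.le (Real.rpow_nonneg (qf_nonneg z x) e)
  have hΦz : Φ z = 0 := by
    rw [hΦ]; simp only [qf_self]; rw [Real.zero_rpow hepos.ne', mul_zero]
  obtain ⟨xs, hxs, hmax⟩ := (isCompact_closedBall x₀ r).exists_isMaxOn
    (⟨z, hz'⟩ : (closedBall x₀ r).Nonempty)
    (huc.sub hΦcont.continuousOn)
  set M : ℝ := u xs - Φ xs with hM
  have hub : ∀ x ∈ closedBall x₀ r, u x ≤ Φ x + M := by
    intro x hx
    have := hmax hx
    simp only [Set.mem_setOf_eq, Pi.sub_apply] at this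
    linarith [this]
  have hMz : u z ≤ M := by
    have := hmax hz'
    simp only [Set.mem_setOf_eq, Pi.sub_apply] at this
    rw [hΦz] at this
    linarith [this]
  have hMpos : 0 < M := lt_of_lt_of_le upos hMz
  -- the maximizer is interior
  have hxsball : xs ∈ ball x₀ r := by
    rcases lt_or_eq_of_le (mem_closedBall.1 hxs) with hlt | heq
    · exact mem_ball.2 hlt
    · exfalso
      have hsph : xs ∈ sphere x₀ r := mem_sphere.2 heq
      have huxs : u xs = α := hbd xs hsph
      have hdist : d ≤ dist xs z := by
        have htri : dist xs x₀ ≤ dist xs z + dist z x₀ := dist_triangle xs z x₀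
        rw [heq] at htri; linarith
      have hqf : d ^ 2 ≤ qf z xs := by
        rw [qf_eq_dist]
        exact pow_le_pow_left₀ hdpos.le hdist 2
      have hΦxs : α ≤ Φ xs := by
        rw [hΦ, ← hαd]
        exact mul_le_mul_of_nonneg_left
          (Real.rpow_le_rpow (by positivity) hqf hepos.le) hΥpos.le
      have : u xs - Φ xs ≤ 0 := by rw [huxs]; linarith
      rw [← hM] at this
      linarith
  by_cases hxz : xs = z
  · -- Case A: maximum at the vertex of the cusp
    have hMuz : M = u z := by rw [hM, hxz, hΦz]; ring
    set c₀ : ℝ := lam * (M/2) ^ γ with hc₀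
    have hc₀pos : 0 < c₀ := mul_pos hlam (Real.rpow_pos_of_pos (by linarith) γ)
    have hcu : ContinuousAt u z :=
      huc.continuousAt (mem_nhds_iff.2 ⟨ball x₀ r, ball_subset_closedBall, isOpen_ball, hzball⟩)
    have hev : ∀ᶠ x in nhds z, M/2 < u x := by
      apply continuousAt_const.eventually_lt hcu
      rw [← hMuz]; linarith
    rw [Metric.eventually_nhds_iff] at hev
    obtain ⟨ρ₁, hρ₁, hballu⟩ := hev
    set ρ₂ : ℝ := (c₀ / (64 * Υ ^ 3)) ^ (1/(6*e-4)) with hρ₂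
    have hρ₂pos : 0 < ρ₂ := Real.rpow_pos_of_pos (div_pos hc₀pos (by positivity)) _
    set ρ : ℝ := min (min (d/2) (ρ₁/2)) (ρ₂/2) with hρ
    have hρpos : 0 < ρ := lt_min (lt_min (by linarith) (by linarith)) (by linarith)
    have hρd : ρ ≤ d/2 := le_trans (min_le_left _ _) (min_le_left _ _)
    have hρ1 : ρ ≤ ρ₁/2 := le_trans (min_le_left _ _) (min_le_right _ _)
    have hρlt2 : ρ < ρ₂ := lt_of_le_of_lt (min_le_right _ _) (by linarith)
    have hsubball : closedBall z ρ ⊆ ball x₀ r := by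
      intro x hx
      rw [mem_closedBall] at hx
      rw [mem_ball]
      have := dist_triangle x z x₀
      linarith [hdpos]
    have hsub : closedBall z ρ ⊆ closedBall x₀ r :=
      hsubball.trans ball_subset_closedBall
    set κ : ℝ := 2 * Υ * ρ ^ (2*e - 2) with hκ
    have hκpos : 0 < κ := by
      apply mul_pos (by linarith)
      exact Real.rpow_pos_of_pos hρpos _
    set ψ : EuclideanSpace ℝ (Fin n) → ℝ := tf z 0 M κ 0 with hψ
    obtain ⟨xh, hxh, hmin⟩ := (isCompact_closedBall z ρ).exists_isMinOn
      (⟨z, mem_closedBall_self hρpos.le⟩ : (closedBall z ρ).Nonempty)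
      (((tf_contDiff z 0 M κ 0).continuous.continuousOn).sub (huc.mono hsub))
    set m : ℝ := ψ xh - u xh with hm
    have hψz : ψ z = M := by simp [hψ, tf, qf_self]
    have hmle : m ≤ 0 := by
      have h1 := hmin (mem_closedBall_self hρpos.le)
      simp only [Set.mem_setOf_eq] at h1
      have h1' : ψ xh - u xh ≤ ψ z - u z := h1
      rw [hψz, ← hMuz] at h1'
      rw [hm]
      linarith [h1']
    -- lower bound for ψ - u on the sphere of radius ρ
    have hρ2rpow : (ρ:ℝ) ^ (2:ℕ) = ρ ^ ((2:ℝ)) := by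
      rw [← Real.rpow_natCast ρ 2]; norm_num
    have hκρ : κ * ρ ^ (2:ℕ) = 2 * Υ * ρ ^ (2*e) := by
      rw [hρ2rpow, hκ, mul_assoc, ← Real.rpow_add hρpos]
      congr 2
      ring
    have hsphere : ∀ x, dist x z = ρ → Υ * ρ ^ (2*e) ≤ ψ x - u x := by
      intro x hxd
      have hqx : qf z x = ρ ^ 2 := by rw [qf_eq_dist, hxd]
      have hux : u x ≤ Φ x + M := hub x (hsub (mem_closedBall.2 hxd.le))
      have hΦx : Φ x = Υ * ρ ^ (2*e) := by
        rw [hΦ]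
        simp only [hqx]
        rw [hρ2rpow, ← Real.rpow_mul hρpos.le]
      have hψx : ψ x = M + κ * ρ ^ 2 := by
        simp [hψ, tf, hqx]
      rw [hψx, hκρ] at *
      rw [hΦx] at hux
      linarith
    have hxhlt : dist xh z < ρ := by
      rcases lt_or_eq_of_le (mem_closedBall.1 hxh) with hlt | heq
      · exact hlt
      · exfalso
        have := hsphere xh heq
        have hpos2 : 0 < Υ * ρ ^ (2*e) :=
          mul_pos hΥpos (Real.rpow_pos_of_pos hρpos _)
        rw [← hm] at this
        linarith
    set φt : EuclideanSpace ℝ (Fin n) → ℝ := tf z 0 (M - m) κ 0 with hφt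
    have hφteq : ∀ x, φt x = ψ x - m := by
      intro x; simp only [hφt, hψ, tf]; ring
    have hφtxh : φt xh = u xh := by rw [hφteq, hm]; ring
    have hloc : IsLocalMax (fun x => u x - φt x) xh := by
      apply Filter.eventually_of_mem (ball_mem_nhds xh (by linarith : (0:ℝ) < ρ - dist xh z))
      intro y hy
      have hy' : y ∈ closedBall z ρ := by
        rw [mem_ball] at hy
        rw [mem_closedBall]
        have := dist_triangle y xh z
        linarith
      have h2 := hmin hy'
      simp only [Set.mem_setOf_eq] at h2
      have h2' : ψ xh - u xh ≤ ψ y - u y := h2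
      show u y - φt y ≤ u xh - φt xh
      rw [hφtxh, hφteq y, hm] at *
      linarith [h2']
    have hxhball : xh ∈ ball x₀ r := hsubball hxh
    have hsub2 := hsol.2 φt (by rw [hφt]; exact tf_contDiff _ _ _ _ _) xh hxhball hφtxh hloc
    rw [hφt] at hφtxh
    rw [hφt, infLap_tf] at hsub2
    simp only [hφtxh] at hsub2
    have hS : qf z xh ≤ ρ ^ 2 := by
      rw [qf_eq_dist]
      exact pow_le_pow_left₀ dist_nonneg hxhlt.le 2
    have hSnn : 0 ≤ qf z xh := qf_nonneg z xh
    have hflow : c₀ ≤ f (u xh) := by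
      have h1 : M/2 < u xh := hballu (lt_of_lt_of_le hxhlt (by linarith))
      have h2 : (M/2 : ℝ) ∈ Ici (0:ℝ) := by simp; linarith
      have h3 : u xh ∈ Ici (0:ℝ) := by simp [hu0 xh (hsub hxh)]
      calc c₀ ≤ f (M/2) := hflb (M/2) (by linarith)
        _ ≤ f (u xh) := hfmono h2 h3 h1.le
    have hup : 8 * κ ^ 3 * (qf z xh) ≤ 64 * Υ ^ 3 * ρ ^ (6*e - 4) := by
      have hκ3 : κ ^ 3 = 8 * Υ ^ 3 * ρ ^ ((2*e-2)*3) := by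
        rw [hκ, mul_pow, mul_pow, Real.rpow_mul hρpos.le, ← Real.rpow_natCast (ρ ^ (2*e-2)) 3]
        norm_num
      have h1 : 8 * κ ^ 3 * qf z xh ≤ 8 * κ ^ 3 * ρ ^ 2 := by
        apply mul_le_mul_of_nonneg_left hS (by positivity)
      have hmerge : ρ ^ ((2*e-2)*3) * ρ ^ ((2:ℝ)) = ρ ^ (6*e-4) := by
        rw [← Real.rpow_add hρpos]; congr 1; ring
      have h2 : 8 * κ ^ 3 * ρ ^ 2 = 64 * Υ ^ 3 * ρ ^ (6*e-4) := by
        rw [hκ3, hρ2rpow, ← hmerge]; ring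
      linarith
    have hfin : 64 * Υ ^ 3 * ρ ^ (6*e-4) < c₀ := by
      have h1 : ρ ^ (6*e-4) < ρ₂ ^ (6*e-4) :=
        Real.rpow_lt_rpow hρpos.le hρlt2 he64
      have h2 : ρ₂ ^ (6*e-4) = c₀ / (64 * Υ ^ 3) := by
        rw [hρ₂, ← Real.rpow_mul (div_pos hc₀pos (by positivity)).le,
          one_div, inv_mul_cancel₀ he64.ne', Real.rpow_one]
      rw [h2] at h1
      have h3 : (0:ℝ) < 64 * Υ ^ 3 := by positivity
      calc 64 * Υ ^ 3 * ρ ^ (6*e-4) < 64 * Υ ^ 3 * (c₀ / (64 * Υ ^ 3)) :=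
            mul_lt_mul_of_pos_left h1 h3
        _ = c₀ := by field_simp
    -- contradiction
    have hsub3 : f (u xh) ≤ 8 * κ ^ 3 * qf z xh := by
      refine le_trans hsub2 (le_of_eq ?_)
      ring
    linarith
  · -- Case B: maximum away from the vertex
    set qs : ℝ := qf z xs with hqs
    have hqspos : 0 < qs := by
      rcases lt_or_eq_of_le (qf_nonneg z xs) with h | h
      · exact h
      · exfalso
        apply hxz
        have : dist xs z ^ 2 = 0 := by rw [← qf_eq_dist, ← h]
        have hd0 : dist xs z = 0 := by
          exact (pow_eq_zero_iff two_ne_zero).1 this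
        exact dist_eq_zero.1 hd0
    set Φs : ℝ := Υ * qs ^ e with hΦs
    have hΦsval : Φ xs = Φs := by rw [hΦ]
    have huxs : u xs = Φs + M := by rw [hM, hΦsval]; ring
    have hΦsnn : 0 ≤ Φs := mul_nonneg hΥpos.le (Real.rpow_nonneg hqspos.le e)
    set Bc : ℝ := Υ * e * qs ^ (e - 1) with hBc
    have hBcpos : 0 < Bc :=
      mul_pos (mul_pos hΥpos hepos) (Real.rpow_pos_of_pos hqspos _)
    set G2 : ℝ := Υ * e * (e - 1) * qs ^ (e - 2) with hG2
    set m₀ : ℝ := lam * ((Φs + M) ^ γ - Φs ^ γ) with hm₀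
    have hm₀pos : 0 < m₀ := by
      apply mul_pos hlam
      have := Real.rpow_lt_rpow hΦsnn (by linarith : Φs < Φs + M) hγpos
      linarith
    set ε : ℝ := m₀ / (32 * Bc ^ 2 * qs ^ 2 + 1) with hε
    have hDen : (0:ℝ) < 32 * Bc ^ 2 * qs ^ 2 + 1 := by positivity
    have hεpos : 0 < ε := div_pos hm₀pos hDen
    have hεsmall : 32 * ε * Bc ^ 2 * qs ^ 2 < m₀ := by
      rw [hε]
      have h1 : 32 * Bc ^ 2 * qs ^ 2 / (32 * Bc ^ 2 * qs ^ 2 + 1) < 1 := by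
        rw [div_lt_one hDen]; linarith
      calc 32 * (m₀ / (32 * Bc ^ 2 * qs ^ 2 + 1)) * Bc ^ 2 * qs ^ 2
          = m₀ * (32 * Bc ^ 2 * qs ^ 2 / (32 * Bc ^ 2 * qs ^ 2 + 1)) := by ring
        _ < m₀ * 1 := by exact mul_lt_mul_of_pos_left h1 hm₀pos
        _ = m₀ := mul_one m₀
    obtain ⟨δ, hδpos, hδqs, htay⟩ := taylor_upper Υ e qs ε hqspos hεpos
    set ψ : EuclideanSpace ℝ (Fin n) → ℝ := tf z qs (Φs + M) Bc (G2/2 + ε) with hψ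
    have hψxs : ψ xs = u xs := by
      rw [hψ, huxs]
      simp only [tf, ← hqs]
      ring
    -- local maximum of u - ψ at xs
    have hloc : IsLocalMax (fun x => u x - ψ x) xs := by
      have hV : (ball x₀ r ∩ qf z ⁻¹' (ball qs δ)) ∈ nhds xs := by
        apply IsOpen.mem_nhds
        · exact isOpen_ball.inter ((qf_continuous z).isOpen_preimage _ isOpen_ball)
        · constructor
          · exact hxsball
          · simp only [Set.mem_preimage, mem_ball, ← hqs, dist_self]
            exact hδpos
      apply Filter.eventually_of_mem hV
      intro y hy
      obtain ⟨hy1, hy2⟩ := hy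
      have hy2' : |qf z y - qs| ≤ δ := by
        rw [Set.mem_preimage, mem_ball, Real.dist_eq] at hy2
        exact hy2.le
      have hbound := htay (qf z y) hy2'
      have huy : u y ≤ Φ y + M := hub y (ball_subset_closedBall hy1)
      have hΦy : Φ y = Υ * (qf z y) ^ e := by rw [hΦ]
      show u y - ψ y ≤ u xs - ψ xs
      rw [hψxs, sub_self]
      have hψy : ψ y = (Φs + M) + Bc * (qf z y - qs) + (G2/2 + ε) * (qf z y - qs) ^ 2 := by
        rw [hψ]; simp only [tf]
      rw [hψy]
      rw [hΦy] at huy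
      rw [hΦs, hBc, hG2] at *
      linarith [hbound, huy]
    have hsub2 := hsol.2 ψ (by rw [hψ]; exact tf_contDiff _ _ _ _ _) xs hxsball hψxs hloc
    rw [hψ, infLap_tf] at hsub2
    rw [hψ] at hψxs
    simp only [hψxs] at hsub2
    -- evaluate infLap at xs : qf z xs = qs
    have hID := main_identity γ lam Υ qs hγpos hγ3 hlam hΥpos hqspos hΥ3γ
    rw [← he] at hID
    rw [← hBc, ← hG2] at hID
    have hval : 32 * (G2/2 + ε) * (Bc + 2 * (G2/2 + ε) * (qf z xs - qs)) ^ 2 * (qf z xs) ^ 2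
        + 8 * (Bc + 2 * (G2/2 + ε) * (qf z xs - qs)) ^ 3 * (qf z xs)
        = lam * Φs ^ γ + 32 * ε * Bc ^ 2 * qs ^ 2 := by
      rw [← hqs, sub_self, mul_zero, add_zero]
      rw [hΦs]
      rw [← hID]
      ring
    rw [hval] at hsub2
    -- lower bound on f (u xs)
    have hflow : lam * (Φs + M) ^ γ ≤ f (u xs) := by
      rw [huxs]
      exact hflb (Φs + M) (by linarith)
    have : lam * (Φs + M) ^ γ = lam * Φs ^ γ + m₀ := by rw [hm₀]; ring
    linarith
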